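/- Let μ = δ_0 + Σ_j c_j δ_{x_j}, where {Q_j} is a countable collection of cubes in ℝ^n all containing the origin such that for each j there is x_j ∈ Q_j with x_j ∉ Q_k for k ≠ j, and {c_j} is a sequence of positive numbers with Σ_j c_j = ∞ and c_j → 0. Then for every α ∈ (0,1), the measure of the set {x : M_μ χ_{\{0\}}(x) > α} is infinite relative to μ({0}) = 1; in particular sup_E μ({M_μ χ_E > α})/μ(E) = ∞ for every α ∈ (0,1), so M_μ satisfies no Tauberian estimate and is unbounded on L^p(μ) for all p < ∞. -/

import Mathlib

open MeasureTheory Metric Set Filter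
open scoped ENNReal

/-- The uncentered Hardy–Littlewood maximal operator over axis-parallel cubes
(closed balls in the sup metric), with respect to a measure μ. -/
noncomputable def maxOpMu {n : ℕ} (μ : Measure (Fin n → ℝ)) (f : (Fin n → ℝ) → ℝ≥0∞)
    (x : Fin n → ℝ) : ℝ≥0∞ :=
  ⨆ (c : Fin n → ℝ) (r : ℝ) (_ : 0 < r) (_ : x ∈ closedBall c r)
    (_ : 0 < μ (closedBall c r)),
    (∫⁻ y in closedBall c r, f y ∂μ) / μ (closedBall c r)

/-- Let μ = δ₀ + Σ_j c_j δ_{x_j}, where {Q_j} are cubes all containing the origin, x_j ∈ Q_j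
but x_j ∉ Q_k for k ≠ j, and c_j > 0 with Σ c_j = ∞ and c_j → 0.  Then μ({0}) = 1 while for
every α ∈ (0,1) the set {M_μ χ_{{0}} > α} has infinite μ-measure; hence the sharp Tauberian
constant of M_μ is infinite for every α ∈ (0,1) and M_μ is unbounded on L^p(μ) for all
p < ∞. -/
theorem no_tauberian_for_bad_measure (n : ℕ)
    (q : ℕ → (Fin n → ℝ)) (ρ : ℕ → ℝ) (hρ : ∀ j, 0 < ρ j)
    (x : ℕ → (Fin n → ℝ))
    (h0 : ∀ j, (0 : Fin n → ℝ) ∈ closedBall (q j) (ρ j))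
    (hxin : ∀ j, x j ∈ closedBall (q j) (ρ j))
    (hxout : ∀ j k, j ≠ k → x j ∉ closedBall (q k) (ρ k))
    (c : ℕ → ℝ) (hc : ∀ j, 0 < c j) (hdiv : ¬ Summable c)
    (hto0 : Tendsto c atTop (nhds 0))
    (μ : Measure (Fin n → ℝ))
    (hμ : μ = Measure.dirac 0 +
      Measure.sum (fun j => (ENNReal.ofReal (c j)) • Measure.dirac (x j))) :
    μ {(0 : Fin n → ℝ)} = 1 ∧
    (∀ α : ℝ, 0 < α → α < 1 →
      μ {y | ∃ (cc : Fin n → ℝ) (r : ℝ), 0 < r ∧ y ∈ closedBall cc r ∧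
          0 < μ (closedBall cc r) ∧
          ENNReal.ofReal α * μ (closedBall cc r) <
            μ (closedBall cc r ∩ {(0 : Fin n → ℝ)})} = ⊤) ∧
    (∀ p : ℝ, 1 ≤ p → ¬ ∃ K : ℝ≥0∞, K < ⊤ ∧
      ∀ f : (Fin n → ℝ) → ℝ≥0∞, Measurable f →
        (∫⁻ y, (maxOpMu μ f y) ^ p ∂μ) ≤ K * ∫⁻ y, (f y) ^ p ∂μ) := by
  -- x j is never 0
  have hx0 : ∀ j, x j ≠ 0 := by
    intro j h
    exact hxout j (j + 1) (by omega) (h ▸ h0 (j + 1))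
  -- general formula for μ of a measurable set
  have happ : ∀ s : Set (Fin n → ℝ), MeasurableSet s →
      μ s = Measure.dirac (0 : Fin n → ℝ) s
        + ∑' k, ENNReal.ofReal (c k) * Measure.dirac (x k) s := by
    intro s hs
    rw [hμ, Measure.add_apply, Measure.sum_apply _ hs]
    simp [Measure.smul_apply, smul_eq_mul]
  -- μ {0} = 1
  have hμ0 : μ {(0 : Fin n → ℝ)} = 1 := by
    rw [happ _ (measurableSet_singleton 0)]
    have h1 : Measure.dirac (0 : Fin n → ℝ) {(0 : Fin n → ℝ)} = 1 := by
      simp [Measure.dirac_apply' _ (measurableSet_singleton _)]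
    have h2 : ∀ k, ENNReal.ofReal (c k) * Measure.dirac (x k) {(0 : Fin n → ℝ)} = 0 := by
      intro k
      rw [Measure.dirac_apply' _ (measurableSet_singleton _),
        Set.indicator_of_notMem (by simpa using hx0 k)]
      simp
    rw [h1, ENNReal.tsum_eq_zero.mpr h2]
    simp
  -- μ of the j-th cube
  have hball : ∀ j, μ (closedBall (q j) (ρ j)) = 1 + ENNReal.ofReal (c j) := by
    intro j
    rw [happ _ measurableSet_closedBall]
    have h1 : Measure.dirac (0 : Fin n → ℝ) (closedBall (q j) (ρ j)) = 1 := by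
      rw [Measure.dirac_apply' _ measurableSet_closedBall, Set.indicator_of_mem (h0 j)]
      rfl
    have h2 : (∑' k, ENNReal.ofReal (c k) * Measure.dirac (x k) (closedBall (q j) (ρ j)))
        = ENNReal.ofReal (c j) := by
      rw [tsum_eq_single j]
      · rw [Measure.dirac_apply' _ measurableSet_closedBall, Set.indicator_of_mem (hxin j)]
        simp
      · intro k hk
        rw [Measure.dirac_apply' _ measurableSet_closedBall,
          Set.indicator_of_notMem (hxout k j hk)]
        simp
    rw [h1, h2]
  have hballpos : ∀ j, 0 < μ (closedBall (q j) (ρ j)) := by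
    intro j
    rw [hball j]
    exact lt_of_lt_of_le one_pos le_self_add
  have hcap : ∀ j, closedBall (q j) (ρ j) ∩ {(0 : Fin n → ℝ)} = {(0 : Fin n → ℝ)} :=
    fun j => Set.inter_eq_right.mpr (Set.singleton_subset_iff.mpr (h0 j))
  -- the tail image sets have infinite measure
  have hT : ∀ N : ℕ, μ (x '' Set.Ici N) = ⊤ := by
    intro N
    have hTm : MeasurableSet (x '' Set.Ici N) :=
      ((Set.to_countable (Set.Ici N)).image x).measurableSet
    rw [happ _ hTm]
    have htail : (∑' k, ENNReal.ofReal (c (k + N))) = ⊤ := by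
      by_contra h
      have heq : ∀ k : ℕ, ENNReal.ofReal (c (k + N)) = ((c (k + N)).toNNReal : ℝ≥0∞) :=
        fun k => rfl
      have h' : (∑' k, ((c (k + N)).toNNReal : ℝ≥0∞)) ≠ ⊤ := by
        rw [show (∑' k, ((c (k + N)).toNNReal : ℝ≥0∞)) = ∑' k, ENNReal.ofReal (c (k + N)) from
          tsum_congr fun k => (heq k).symm]
        exact h
      have hsum := ENNReal.tsum_coe_ne_top_iff_summable.mp h'
      have hsum2 : Summable (fun k => c (k + N)) :=
        (NNReal.summable_coe.mpr hsum).congr fun k => Real.coe_toNNReal _ (hc _).le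
      exact hdiv ((summable_nat_add_iff N).mp hsum2)
    have hge : (⊤ : ℝ≥0∞) ≤ ∑' k, ENNReal.ofReal (c k) * Measure.dirac (x k) (x '' Set.Ici N) := by
      rw [← htail]
      have := ENNReal.tsum_comp_le_tsum_of_injective
        (f := fun k : ℕ => k + N) (add_left_injective N)
        (fun k => ENNReal.ofReal (c k) * Measure.dirac (x k) (x '' Set.Ici N))
      refine le_trans (le_of_eq ?_) this
      refine tsum_congr fun k => ?_
      have hmem : x (k + N) ∈ x '' Set.Ici N :=
        Set.mem_image_of_mem x (by simp [Set.mem_Ici])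
      rw [Measure.dirac_apply' _ hTm, Set.indicator_of_mem hmem]
      simp
    have : (∑' k, ENNReal.ofReal (c k) * Measure.dirac (x k) (x '' Set.Ici N)) = ⊤ :=
      top_le_iff.mp hge
    rw [this]
    simp
  -- helper: from c j → 0, get tails below ε
  have htails : ∀ ε : ℝ, 0 < ε → ∃ N : ℕ, ∀ j, N ≤ j → c j < ε := by
    intro ε hε
    have := hto0.eventually (eventually_lt_nhds hε)
    exact eventually_atTop.mp this
  refine ⟨hμ0, ?_, ?_⟩
  · -- Tauberian failure
    intro α hα0 hα1
    obtain ⟨N, hN⟩ := htails ((1 - α) / α) (div_pos (by linarith) hα0)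
    have hsub : x '' Set.Ici N ⊆ {y | ∃ (cc : Fin n → ℝ) (r : ℝ), 0 < r ∧ y ∈ closedBall cc r ∧
        0 < μ (closedBall cc r) ∧
        ENNReal.ofReal α * μ (closedBall cc r) <
          μ (closedBall cc r ∩ {(0 : Fin n → ℝ)})} := by
      rintro y ⟨j, hj, rfl⟩
      refine ⟨q j, ρ j, hρ j, hxin j, hballpos j, ?_⟩
      rw [hcap j, hμ0, hball j]
      have hcj : c j < (1 - α) / α := hN j hj
      have hlt : α * (1 + c j) < 1 := by
        have : α * (1 + c j) < α * (1 + (1 - α) / α) := by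
          apply mul_lt_mul_of_pos_left _ hα0
          linarith
        calc α * (1 + c j) < α * (1 + (1 - α) / α) := this
          _ = 1 := by field_simp; ring
      calc ENNReal.ofReal α * (1 + ENNReal.ofReal (c j))
          = ENNReal.ofReal (α * (1 + c j)) := by
            rw [ENNReal.ofReal_mul hα0.le, ENNReal.ofReal_add zero_le_one (hc j).le,
              ENNReal.ofReal_one]
        _ < 1 := by
            rw [← ENNReal.ofReal_one]
            exact ENNReal.ofReal_lt_ofReal_iff one_pos |>.mpr hlt
    exact top_le_iff.mp ((hT N).symm.le.trans (measure_mono hsub))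
  · -- no L^p bound
    intro p hp ⟨K, hK, hbound⟩
    have hppos : (0 : ℝ) < p := lt_of_lt_of_le one_pos hp
    set f : (Fin n → ℝ) → ℝ≥0∞ := ({(0 : Fin n → ℝ)} : Set (Fin n → ℝ)).indicator 1 with hf
    have hfm : Measurable f :=
      Measurable.indicator measurable_const (measurableSet_singleton _)
    have hrhs : (∫⁻ y, (f y) ^ p ∂μ) = 1 := by
      have : ∀ y, (f y) ^ p = f y := by
        intro y
        by_cases hy : y = 0
        · simp [hf, hy, ENNReal.one_rpow]
        · have hy' : y ∉ ({(0 : Fin n → ℝ)} : Set (Fin n → ℝ)) := by simpa using hy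
          rw [hf, Set.indicator_of_notMem hy']
          exact ENNReal.zero_rpow_of_pos hppos
      simp_rw [this]
      rw [hf, lintegral_indicator_one (measurableSet_singleton _), hμ0]
    obtain ⟨N, hN⟩ := htails 1 one_pos
    set T := x '' Set.Ici N with hTdef
    have hTm : MeasurableSet T := ((Set.to_countable (Set.Ici N)).image x).measurableSet
    -- integral of f over each cube equals 1
    have hIB : ∀ j, (∫⁻ y in closedBall (q j) (ρ j), f y ∂μ) = 1 := by
      intro j
      rw [hf, lintegral_indicator (measurableSet_singleton _)]
      simp only [Pi.one_apply]
      rw [setLIntegral_one, Measure.restrict_apply (measurableSet_singleton _)]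
      rw [Set.inter_comm, hcap j, hμ0]
    -- lower bound for the maximal function on T
    have hM : ∀ y ∈ T, (2 : ℝ≥0∞)⁻¹ ≤ maxOpMu μ f y := by
      rintro y ⟨j, hj, rfl⟩
      have hle : (2 : ℝ≥0∞)⁻¹ ≤
          (∫⁻ z in closedBall (q j) (ρ j), f z ∂μ) / μ (closedBall (q j) (ρ j)) := by
        rw [hIB j, hball j, one_div]
        rw [ENNReal.inv_le_inv]
        have : ENNReal.ofReal (c j) ≤ 1 := ENNReal.ofReal_le_one.mpr (hN j hj).le
        calc (1 : ℝ≥0∞) + ENNReal.ofReal (c j) ≤ 1 + 1 := add_le_add_right this 1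
          _ = 2 := one_add_one_eq_two
      refine hle.trans ?_
      unfold maxOpMu
      refine le_iSup_of_le (q j) (le_iSup_of_le (ρ j) ?_)
      rw [iSup_pos (hρ j), iSup_pos (hxin j), iSup_pos (hballpos j)]
    -- hence the left side is infinite
    have hlhs : (∫⁻ y, (maxOpMu μ f y) ^ p ∂μ) = ⊤ := by
      have hpt : ∀ y, T.indicator (fun _ => (2 : ℝ≥0∞)⁻¹ ^ p) y ≤ (maxOpMu μ f y) ^ p := by
        intro y
        by_cases hy : y ∈ T
        · rw [Set.indicator_of_mem hy]
          exact ENNReal.rpow_le_rpow (hM y hy) hppos.le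
        · rw [Set.indicator_of_notMem hy]
          exact zero_le
      have h1 : (∫⁻ y, T.indicator (fun _ => (2 : ℝ≥0∞)⁻¹ ^ p) y ∂μ) = ⊤ := by
        rw [lintegral_indicator hTm, setLIntegral_const, hT N]
        rw [ENNReal.mul_top]
        exact (ENNReal.rpow_pos (by norm_num) (by norm_num)).ne'
      exact top_le_iff.mp (h1 ▸ lintegral_mono hpt)
    have := hbound f hfm
    rw [hlhs, hrhs, mul_one] at this
    exact absurd (top_le_iff.mp this) hK.ne
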